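/- arXiv:1912.08660 — 2 statements merged into one kernel-verified Lean document; each statement's English description precedes it below -/
import Mathlib

section
/- The quantum Fisher information matrix is convex in the state: for density operators ρ, σ and 0 ≤ ε ≤ 1, every diagonal element satisfies [F_Q((1−ε)ρ + εσ)]_{kk} ≤ (1−ε)[F_Q(ρ)]_{kk} + ε[F_Q(σ)]_{kk}, where F_Q is computed with respect to fixed Hermitian derivative directions ∂_kρ, ∂_kσ (the derivative of the mixture being the mixture of derivatives), using the formula [F_Q(ρ)]_{kk} = 2·vec(∂_kρ)† [ρ* ⊗ I + I ⊗ ρ]⁻¹ vec(∂_kρ). -/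
open Matrix
open scoped ComplexOrder
open scoped Kronecker

/-- Vectorization (column stacking, up to index convention) of a square matrix. -/
def matVec {d : ℕ} (M : Matrix (Fin d) (Fin d) ℂ) : Fin d × Fin d → ℂ :=
  fun p => M p.1 p.2

/-- The quadratic form `2·vec(X)† [ρ* ⊗ I + I ⊗ ρ]⁻¹ vec(X)` defining the quantum
Fisher information diagonal elements. -/
noncomputable def qfiQuad {d : ℕ} (ρ X : Matrix (Fin d) (Fin d) ℂ) : ℝ :=
  (2 * (star (matVec X) ⬝ᵥ
    (((ρ.map (starRingEnd ℂ)) ⊗ₖ (1 : Matrix (Fin d) (Fin d) ℂ)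
        + (1 : Matrix (Fin d) (Fin d) ℂ) ⊗ₖ ρ)⁻¹ *ᵥ matVec X))).re

/-- The superoperator matrix `ρ* ⊗ I + I ⊗ ρ`. -/
noncomputable def supOp {d : ℕ} (ρ : Matrix (Fin d) (Fin d) ℂ) :
    Matrix (Fin d × Fin d) (Fin d × Fin d) ℂ :=
  (ρ.map (starRingEnd ℂ)) ⊗ₖ (1 : Matrix (Fin d) (Fin d) ℂ)
    + (1 : Matrix (Fin d) (Fin d) ℂ) ⊗ₖ ρ

lemma qfiQuad_eq {d : ℕ} (ρ X : Matrix (Fin d) (Fin d) ℂ) :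
    qfiQuad ρ X = (2 * (star (matVec X) ⬝ᵥ ((supOp ρ)⁻¹ *ᵥ matVec X))).re := rfl

lemma map_conj_eq_transpose {d : ℕ} {ρ : Matrix (Fin d) (Fin d) ℂ}
    (hρ : ρ.IsHermitian) : ρ.map (starRingEnd ℂ) = ρᵀ := by
  ext i j
  have := congrFun (congrFun hρ j) i
  simpa [Matrix.conjTranspose_apply, Matrix.map_apply, Matrix.transpose_apply] using this

lemma kron_one_posSemidef {d : ℕ} {A : Matrix (Fin d) (Fin d) ℂ}
    (hA : A.PosSemidef) : (A ⊗ₖ (1 : Matrix (Fin d) (Fin d) ℂ)).PosSemidef := by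
  rw [Matrix.posSemidef_iff_dotProduct_mulVec]
  constructor
  · have hAh := hA.isHermitian
    ext ⟨i, j⟩ ⟨k, l⟩
    have := congrFun (congrFun hAh i) k
    simp only [Matrix.conjTranspose_apply, Matrix.kroneckerMap_apply, star_mul',
      Matrix.one_apply] at *
    by_cases h : j = l
    · simp [h, this]
    · simp [h, this, Ne.symm h]
  · intro x
    have key : star x ⬝ᵥ ((A ⊗ₖ (1 : Matrix (Fin d) (Fin d) ℂ)) *ᵥ x)
        = ∑ j : Fin d, star (fun i => x (i, j)) ⬝ᵥ (A *ᵥ fun i => x (i, j)) := by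
      simp only [dotProduct, mulVec, Matrix.kroneckerMap_apply, Matrix.one_apply,
        Fintype.sum_prod_type, Pi.star_apply, mul_ite, ite_mul, mul_zero, zero_mul, mul_one,
        Finset.sum_ite_irrel, Finset.sum_const_zero,
        Finset.sum_ite_eq, Finset.sum_ite_eq', Finset.mem_univ, if_true]
      rw [Finset.sum_comm]
    rw [key]
    exact Finset.sum_nonneg fun j _ => hA.dotProduct_mulVec_nonneg _

lemma one_kron_posDef {d : ℕ} {A : Matrix (Fin d) (Fin d) ℂ}
    (hA : A.PosDef) : ((1 : Matrix (Fin d) (Fin d) ℂ) ⊗ₖ A).PosDef := by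
  rw [Matrix.posDef_iff_dotProduct_mulVec]
  constructor
  · have hAh := hA.isHermitian
    ext ⟨i, j⟩ ⟨k, l⟩
    have := congrFun (congrFun hAh j) l
    simp only [Matrix.conjTranspose_apply, Matrix.kroneckerMap_apply, star_mul',
      Matrix.one_apply] at *
    by_cases h : i = k
    · simp [h, this]
    · simp [h, this, Ne.symm h]
  · intro x hx
    have key : star x ⬝ᵥ (((1 : Matrix (Fin d) (Fin d) ℂ) ⊗ₖ A) *ᵥ x)
        = ∑ i : Fin d, star (fun j => x (i, j)) ⬝ᵥ (A *ᵥ fun j => x (i, j)) := by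
      simp only [dotProduct, mulVec, Matrix.kroneckerMap_apply, Matrix.one_apply,
        Fintype.sum_prod_type, Pi.star_apply, mul_ite, ite_mul, mul_zero, zero_mul, one_mul,
        Finset.sum_ite_irrel, Finset.sum_const_zero,
        Finset.sum_ite_eq, Finset.sum_ite_eq', Finset.mem_univ, if_true]
    rw [key]
    obtain ⟨p, hp⟩ : ∃ p, x p ≠ 0 := by
      by_contra h
      push_neg at h
      exact hx (funext h)
    refine Finset.sum_pos' (fun i _ => hA.posSemidef.dotProduct_mulVec_nonneg _) ⟨p.1, Finset.mem_univ _, ?_⟩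
    refine hA.dotProduct_mulVec_pos fun h => hp ?_
    have := congrFun h p.2
    simpa using this

lemma supOp_posDef {d : ℕ} {ρ : Matrix (Fin d) (Fin d) ℂ} (hρ : ρ.PosDef) :
    (supOp ρ).PosDef := by
  have h1 : (ρ.map (starRingEnd ℂ)).PosSemidef := by
    rw [map_conj_eq_transpose hρ.isHermitian]
    exact hρ.transpose.posSemidef
  exact Matrix.PosDef.posSemidef_add (kron_one_posSemidef h1) (one_kron_posDef hρ)

/-- smul of a PosDef matrix by a positive real is PosDef. -/
lemma posDef_real_smul {d : ℕ} {M : Matrix (Fin d) (Fin d) ℂ} {a : ℝ}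
    (ha : 0 < a) (hM : M.PosDef) : (((a : ℂ)) • M).PosDef := by
  rw [Matrix.posDef_iff_dotProduct_mulVec]
  constructor
  · ext i j
    have := congrFun (congrFun hM.isHermitian i) j
    simp only [Matrix.conjTranspose_apply, Matrix.smul_apply, star_mul', smul_eq_mul] at *
    rw [← this]; simp [Complex.conj_ofReal, mul_comm]
  · intro x hx
    have h := hM.dotProduct_mulVec_pos hx
    have : star x ⬝ᵥ (((a : ℂ) • M) *ᵥ x) = (a : ℂ) * (star x ⬝ᵥ (M *ᵥ x)) := by
      simp [Matrix.smul_mulVec, dotProduct_smul]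
    rw [this]
    exact mul_pos (Complex.zero_lt_real.mpr ha) h

lemma posSemidef_real_smul {d : ℕ} {M : Matrix (Fin d) (Fin d) ℂ} {a : ℝ}
    (ha : 0 ≤ a) (hM : M.PosDef) : (((a : ℂ)) • M).PosSemidef := by
  rcases eq_or_lt_of_le ha with h | h
  · simp [← h]
    exact Matrix.PosSemidef.zero
  · exact (posDef_real_smul h hM).posSemidef

lemma mix_posDef {d : ℕ} {ρ σ : Matrix (Fin d) (Fin d) ℂ}
    (hρ : ρ.PosDef) (hσ : σ.PosDef) {ε : ℝ} (hε0 : 0 ≤ ε) (hε1 : ε ≤ 1) :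
    (((1 - ε : ℝ) : ℂ) • ρ + ((ε : ℝ) : ℂ) • σ).PosDef := by
  rcases eq_or_lt_of_le hε1 with h | h
  · subst h
    simpa using (posDef_real_smul one_pos hσ).add_posSemidef Matrix.PosSemidef.zero
  · exact (posDef_real_smul (by linarith) hρ).add_posSemidef (posSemidef_real_smul hε0 hσ)

lemma supOp_linear {d : ℕ} (ρ σ : Matrix (Fin d) (Fin d) ℂ) (a b : ℝ) :
    supOp ((a : ℂ) • ρ + (b : ℂ) • σ) = (a : ℂ) • supOp ρ + (b : ℂ) • supOp σ := by
  ext ⟨i, j⟩ ⟨k, l⟩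
  simp [supOp, Matrix.kroneckerMap_apply, Matrix.map_apply, Matrix.one_apply,
    Complex.conj_ofReal, mul_add, add_mul]
  split_ifs <;> ring

/-- Key inequality: for `A` positive definite,
`2 Re(z† v) − Re(z† A z) ≤ Re(v† A⁻¹ v)`. -/
lemma key_ineq {n : Type*} [Fintype n] [DecidableEq n] {A : Matrix n n ℂ}
    (hA : A.PosDef) (v z : n → ℂ) :
    2 * (star z ⬝ᵥ v).re - (star z ⬝ᵥ (A *ᵥ z)).re
      ≤ (star v ⬝ᵥ (A⁻¹ *ᵥ v)).re := by
  have hdet : IsUnit A.det := hA.det_pos.ne'.isUnit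
  have hinv : (A⁻¹).PosSemidef := hA.inv.posSemidef
  set w : n → ℂ := v - A *ᵥ z with hw
  have h0 : 0 ≤ (star w ⬝ᵥ (A⁻¹ *ᵥ w)).re := hinv.re_dotProduct_nonneg w
  have h1 : A⁻¹ *ᵥ (A *ᵥ z) = z := by
    rw [Matrix.mulVec_mulVec, Matrix.nonsing_inv_mul _ hdet, Matrix.one_mulVec]
  have h2 : A *ᵥ (A⁻¹ *ᵥ v) = v := by
    rw [Matrix.mulVec_mulVec, Matrix.mul_nonsing_inv _ hdet, Matrix.one_mulVec]
  have h3 : star (A *ᵥ z) ⬝ᵥ (A⁻¹ *ᵥ v) = star z ⬝ᵥ v := by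
    rw [Matrix.star_mulVec, ← Matrix.dotProduct_mulVec, hA.isHermitian.eq, h2]
  have h4 : star (A *ᵥ z) ⬝ᵥ z = star z ⬝ᵥ (A *ᵥ z) := by
    rw [Matrix.star_mulVec, ← Matrix.dotProduct_mulVec, hA.isHermitian.eq]
  have h5 : (star v ⬝ᵥ z).re = (star z ⬝ᵥ v).re := by
    rw [Matrix.star_dotProduct]
    simp
  have hexp : star w ⬝ᵥ (A⁻¹ *ᵥ w)
      = star v ⬝ᵥ (A⁻¹ *ᵥ v) - star v ⬝ᵥ z - star z ⬝ᵥ v + star z ⬝ᵥ (A *ᵥ z) := by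
    rw [hw]
    simp only [star_sub, Matrix.mulVec_sub, sub_dotProduct, dotProduct_sub, h1]
    rw [h3, h4]
    ring
  rw [hexp] at h0
  simp only [Complex.sub_re, Complex.add_re] at h0
  linarith [h5]

lemma ofReal_mul_re (a : ℝ) (z : ℂ) : ((a : ℂ) * z).re = a * z.re := by
  simp [Complex.mul_re]

/-- Convexity of the quantum Fisher information in the state:
for density matrices `ρ, σ`, Hermitian traceless derivatives `X = ∂_kρ`, `Y = ∂_kσ`
and `0 ≤ ε ≤ 1`,
`F_Q((1−ε)ρ + εσ)_{kk} ≤ (1−ε) F_Q(ρ)_{kk} + ε F_Q(σ)_{kk}`,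
where the derivative of the mixture is the mixture of the derivatives. -/
theorem qfi_convexity (d : ℕ) (ρ σ X Y : Matrix (Fin d) (Fin d) ℂ)
    (hρ : ρ.PosDef) (hσ : σ.PosDef) (hρtr : ρ.trace = 1) (hσtr : σ.trace = 1)
    (hX : X.IsHermitian) (hY : Y.IsHermitian)
    (hXtr : X.trace = 0) (hYtr : Y.trace = 0)
    (ε : ℝ) (hε0 : 0 ≤ ε) (hε1 : ε ≤ 1) :
    qfiQuad (((1 - ε : ℝ) : ℂ) • ρ + ((ε : ℝ) : ℂ) • σ)
        (((1 - ε : ℝ) : ℂ) • X + ((ε : ℝ) : ℂ) • Y)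
      ≤ (1 - ε) * qfiQuad ρ X + ε * qfiQuad σ Y := by
  set ρm := ((1 - ε : ℝ) : ℂ) • ρ + ((ε : ℝ) : ℂ) • σ with hρm
  set A := supOp ρ with hAdef
  set B := supOp σ with hBdef
  set M := supOp ρm with hMdef
  have hA : A.PosDef := supOp_posDef hρ
  have hB : B.PosDef := supOp_posDef hσ
  have hMρ : ρm.PosDef := mix_posDef hρ hσ hε0 hε1
  have hM : M.PosDef := supOp_posDef hMρ
  have hMlin : M = ((1 - ε : ℝ) : ℂ) • A + ((ε : ℝ) : ℂ) • B := supOp_linear ρ σ _ _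
  set v := matVec X with hv
  set w := matVec Y with hwdef
  have hvm : matVec (((1 - ε : ℝ) : ℂ) • X + ((ε : ℝ) : ℂ) • Y)
      = ((1 - ε : ℝ) : ℂ) • v + ((ε : ℝ) : ℂ) • w := by
    funext p; simp [hv, hwdef, matVec]
  set vm : Fin d × Fin d → ℂ := ((1 - ε : ℝ) : ℂ) • v + ((ε : ℝ) : ℂ) • w with hvmdef
  set z : Fin d × Fin d → ℂ := M⁻¹ *ᵥ vm with hz
  have hdet : IsUnit M.det := hM.det_pos.ne'.isUnit
  -- the mixture quadratic form equals `2 Re(z† vm) − Re(z† M z)`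
  have hTz : star z ⬝ᵥ vm = star vm ⬝ᵥ (M⁻¹ *ᵥ vm) := by
    rw [hz, Matrix.star_mulVec, ← Matrix.dotProduct_mulVec, hM.inv.isHermitian.eq]
  have hMz : M *ᵥ z = vm := by
    rw [hz, Matrix.mulVec_mulVec, Matrix.mul_nonsing_inv _ hdet, Matrix.one_mulVec]
  have hlhs : qfiQuad ρm (((1 - ε : ℝ) : ℂ) • X + ((ε : ℝ) : ℂ) • Y)
      = 2 * (2 * (star z ⬝ᵥ vm).re - (star z ⬝ᵥ (M *ᵥ z)).re) := by
    rw [qfiQuad_eq, hvm, ← hMdef, hMz, hTz]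
    simp [Complex.mul_re]
    ring
  -- expand linearly
  have hdotvm : (star z ⬝ᵥ vm).re = (1 - ε) * (star z ⬝ᵥ v).re + ε * (star z ⬝ᵥ w).re := by
    rw [hvmdef]
    simp only [dotProduct_add, dotProduct_smul, smul_eq_mul, Complex.add_re,
      ofReal_mul_re]
  have hdotMz : (star z ⬝ᵥ (M *ᵥ z)).re
      = (1 - ε) * (star z ⬝ᵥ (A *ᵥ z)).re + ε * (star z ⬝ᵥ (B *ᵥ z)).re := by
    rw [hMlin]
    simp only [Matrix.add_mulVec, Matrix.smul_mulVec, dotProduct_add,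
      dotProduct_smul, smul_eq_mul, Complex.add_re, ofReal_mul_re]
  have hkA := key_ineq hA v z
  have hkB := key_ineq hB w z
  have hrhsA : qfiQuad ρ X = 2 * (star v ⬝ᵥ (A⁻¹ *ᵥ v)).re := by
    rw [qfiQuad_eq]; simp [Complex.mul_re]; rfl
  have hrhsB : qfiQuad σ Y = 2 * (star w ⬝ᵥ (B⁻¹ *ᵥ w)).re := by
    rw [qfiQuad_eq]; simp [Complex.mul_re]; rfl
  rw [hlhs, hrhsA, hrhsB, hdotvm, hdotMz]
  nlinarith [mul_le_mul_of_nonneg_left hkA (by linarith : (0:ℝ) ≤ 1 - ε),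
    mul_le_mul_of_nonneg_left hkB hε0]
end

section
/- Quantum Fisher information upper-bounds the classical Fisher information: for a smooth family of positive definite density matrices ρ_θ with symmetric logarithmic derivative L (satisfying Lρ + ρL = 2∂_θρ) and any orthonormal basis {|b_n⟩} with p(n|θ) = ⟨b_n|ρ_θ|b_n⟩ > 0, one has Σ_n (∂_θ p(n|θ))²/p(n|θ) ≤ tr[ρ_θ L²]. -/
open Matrix
open scoped ComplexOrder BigOperators

lemma shift_aux {d : ℕ} (M : Matrix (Fin d) (Fin d) ℂ) (w z : Fin d → ℂ) :
    star (M *ᵥ w) ⬝ᵥ z = star w ⬝ᵥ (Mᴴ *ᵥ z) := by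
  rw [Matrix.star_mulVec, Matrix.dotProduct_mulVec]

lemma cs_aux {d : ℕ} (u v : Fin d → ℂ) :
    ‖star u ⬝ᵥ v‖ ^ 2 ≤ (star u ⬝ᵥ u).re * (star v ⬝ᵥ v).re := by
  let u' : EuclideanSpace ℂ (Fin d) := WithLp.toLp 2 u
  let v' : EuclideanSpace ℂ (Fin d) := WithLp.toLp 2 v
  have h1 : star u ⬝ᵥ v = @inner ℂ (EuclideanSpace ℂ (Fin d)) _ u' v' := by
    simp [dotProduct, PiLp.inner_apply, RCLike.inner_apply, u', v', mul_comm]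
  have h2 : star u ⬝ᵥ u = @inner ℂ (EuclideanSpace ℂ (Fin d)) _ u' u' := by
    simp [dotProduct, PiLp.inner_apply, RCLike.inner_apply, u', mul_comm, -inner_self_eq_norm_sq_to_K]
  have h3 : star v ⬝ᵥ v = @inner ℂ (EuclideanSpace ℂ (Fin d)) _ v' v' := by
    simp [dotProduct, PiLp.inner_apply, RCLike.inner_apply, v', mul_comm, -inner_self_eq_norm_sq_to_K]
  have h2' : (@inner ℂ (EuclideanSpace ℂ (Fin d)) _ u' u').re = ‖u'‖ ^ 2 := by
    have := inner_self_eq_norm_sq (𝕜 := ℂ) u'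
    simpa using this
  have h3' : (@inner ℂ (EuclideanSpace ℂ (Fin d)) _ v' v').re = ‖v'‖ ^ 2 := by
    have := inner_self_eq_norm_sq (𝕜 := ℂ) v'
    simpa using this
  rw [h1, h2, h3, h2', h3']
  have := norm_inner_le_norm (𝕜 := ℂ) u' v'
  calc ‖@inner ℂ (EuclideanSpace ℂ (Fin d)) _ u' v'‖ ^ 2 ≤ (‖u'‖ * ‖v'‖) ^ 2 := by
        refine pow_le_pow_left₀ (norm_nonneg _) this 2
    _ = ‖u'‖ ^ 2 * ‖v'‖ ^ 2 := by ring

lemma star_quad {d : ℕ} (M : Matrix (Fin d) (Fin d) ℂ) (x : Fin d → ℂ) :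
    star (star x ⬝ᵥ (M *ᵥ x)) = star x ⬝ᵥ (Mᴴ *ᵥ x) := by
  rw [← Matrix.star_dotProduct, shift_aux]

lemma onb_sum {d : ℕ} (b : Fin d → Fin d → ℂ)
    (horth : ∀ m n, star (b m) ⬝ᵥ b n = if m = n then (1 : ℂ) else 0)
    (A : Matrix (Fin d) (Fin d) ℂ) :
    ∑ n, star (b n) ⬝ᵥ (A *ᵥ b n) = A.trace := by
  let U : Matrix (Fin d) (Fin d) ℂ := Matrix.of fun i n => b n i
  have hU : Uᴴ * U = 1 := by
    ext m n
    simpa [Matrix.mul_apply, Matrix.conjTranspose_apply, Matrix.one_apply,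
      dotProduct, U, mul_comm] using horth m n
  have hU' : U * Uᴴ = 1 := mul_eq_one_comm.mp hU
  have h1 : ∑ n, star (b n) ⬝ᵥ (A *ᵥ b n) = (Uᴴ * A * U).trace := by
    simp [Matrix.trace, Matrix.diag, Matrix.mul_apply, Matrix.conjTranspose_apply,
      dotProduct, Matrix.mulVec, Finset.mul_sum, Finset.sum_mul, U]
    refine Finset.sum_congr rfl fun nn _ => ?_
    rw [Finset.sum_comm]
    refine Finset.sum_congr rfl fun i _ => Finset.sum_congr rfl fun j _ => by ring
  rw [h1, Matrix.trace_mul_cycle, hU', Matrix.one_mul]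

/-- Quantum Fisher information upper-bounds the classical Fisher
information: for a positive definite density matrix `ρ` with Hermitian SLD `L`
(`Lρ + ρL = 2∂_θρ`) and any orthonormal basis `{|b_n⟩}` with
`p(n) = ⟨b_n|ρ|b_n⟩ > 0`, one has `Σ_n (∂_θ p(n))²/p(n) ≤ tr[ρL²]`. -/
theorem classical_le_quantum_fisher (d : ℕ) (b : Fin d → (Fin d → ℂ))
    (horth : ∀ m n, star (b m) ⬝ᵥ b n = if m = n then (1 : ℂ) else 0)
    (ρ L dρ : Matrix (Fin d) (Fin d) ℂ)
    (hρ : ρ.PosDef) (htr : ρ.trace = 1)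
    (hL : L.IsHermitian) (hdρ : dρ.IsHermitian)
    (hrel : L * ρ + ρ * L = (2 : ℂ) • dρ)
    (hp : ∀ n, 0 < (star (b n) ⬝ᵥ (ρ *ᵥ b n)).re) :
    ∑ n, ((star (b n) ⬝ᵥ (dρ *ᵥ b n)).re) ^ 2 / (star (b n) ⬝ᵥ (ρ *ᵥ b n)).re
      ≤ (ρ * L * L).trace.re := by
  have hL' : Lᴴ = L := hL
  have hρ' : ρᴴ = ρ := hρ.isHermitian
  set S := (open scoped MatrixOrder in CFC.sqrt ρ) with hSdef
  have hSH : Sᴴ = S := (open scoped MatrixOrder in (CFC.sqrt_nonneg ρ).posSemidef.isHermitian)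
  have hSS : S * S = ρ := (open scoped MatrixOrder in CFC.sqrt_mul_sqrt_self ρ hρ.posSemidef.nonneg)
  have key : ∀ n, ((star (b n) ⬝ᵥ (dρ *ᵥ b n)).re) ^ 2 / (star (b n) ⬝ᵥ (ρ *ᵥ b n)).re
      ≤ (star (b n) ⬝ᵥ ((L * ρ * L) *ᵥ b n)).re := by
    intro n
    set x := b n with hx
    set c := star x ⬝ᵥ ((L * ρ) *ᵥ x) with hc
    -- Claim A
    have hA : (star x ⬝ᵥ (dρ *ᵥ x)).re = c.re := by
      have h2 : star x ⬝ᵥ (((2 : ℂ) • dρ) *ᵥ x) = c + star x ⬝ᵥ ((ρ * L) *ᵥ x) := by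
        rw [← hrel, Matrix.add_mulVec, dotProduct_add]
      have hconj : star x ⬝ᵥ ((ρ * L) *ᵥ x) = star c := by
        rw [star_quad, Matrix.conjTranspose_mul, hρ', hL']
      rw [hconj] at h2
      have h3 : star x ⬝ᵥ (((2 : ℂ) • dρ) *ᵥ x) = (2 : ℂ) * (star x ⬝ᵥ (dρ *ᵥ x)) := by
        rw [Matrix.smul_mulVec, dotProduct_smul, smul_eq_mul]
      rw [h3] at h2
      have := congrArg Complex.re h2
      simp [Complex.add_re] at this
      linarith
    -- Cauchy–Schwarz
    have hu : star (S *ᵥ (L *ᵥ x)) ⬝ᵥ (S *ᵥ x) = c := by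
      rw [shift_aux, hSH, Matrix.mulVec_mulVec, hSS, shift_aux, hL', Matrix.mulVec_mulVec]
    have huu : star (S *ᵥ (L *ᵥ x)) ⬝ᵥ (S *ᵥ (L *ᵥ x))
        = star x ⬝ᵥ ((L * ρ * L) *ᵥ x) := by
      rw [shift_aux, hSH, Matrix.mulVec_mulVec, hSS, shift_aux, hL',
        Matrix.mulVec_mulVec, Matrix.mulVec_mulVec, Matrix.mul_assoc]
    have hvv : star (S *ᵥ x) ⬝ᵥ (S *ᵥ x) = star x ⬝ᵥ (ρ *ᵥ x) := by
      rw [shift_aux, hSH, Matrix.mulVec_mulVec, hSS]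
    have hcs := cs_aux (S *ᵥ (L *ᵥ x)) (S *ᵥ x)
    rw [hu, huu, hvv] at hcs
    have hre : c.re ^ 2 ≤ ‖c‖ ^ 2 := by
      have : ‖c‖ ^ 2 = c.re ^ 2 + c.im ^ 2 := by
        rw [Complex.sq_norm, Complex.normSq_apply]; ring
      nlinarith [sq_nonneg c.im]
    have hfin : c.re ^ 2 ≤ (star x ⬝ᵥ ((L * ρ * L) *ᵥ x)).re * (star x ⬝ᵥ (ρ *ᵥ x)).re :=
      le_trans hre hcs
    rw [hA, div_le_iff₀ (hp n)]
    exact hfin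
  calc ∑ n, ((star (b n) ⬝ᵥ (dρ *ᵥ b n)).re) ^ 2 / (star (b n) ⬝ᵥ (ρ *ᵥ b n)).re
      ≤ ∑ n, (star (b n) ⬝ᵥ ((L * ρ * L) *ᵥ b n)).re := Finset.sum_le_sum fun n _ => key n
    _ = (∑ n, star (b n) ⬝ᵥ ((L * ρ * L) *ᵥ b n)).re := (Complex.re_sum _ _).symm
    _ = (L * ρ * L).trace.re := by rw [onb_sum b horth]
    _ = (ρ * L * L).trace.re := by rw [Matrix.mul_assoc, Matrix.trace_mul_comm]
end
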